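/- For any n agents equipped with a metric d and any number of clusters k with 1 ≤ k ≤ n, there exists a single k-clustering that simultaneously satisfies 4-FJR with respect to the average loss and 2-FJR with respect to the maximum loss. -/

import Mathlib

open scoped Classical

/-- The maximum of `f` over the finite set `S` (`0` if `S` is empty). -/
noncomputable def maxOver {ι : Type*} (S : Finset ι) (f : ι → ℝ) : ℝ :=
  if h : S.Nonempty then S.sup' h f else 0

/-- The minimum of `f` over the finite set `S` (`0` if `S` is empty). -/
noncomputable def minOver {ι : Type*} (S : Finset ι) (f : ι → ℝ) : ℝ :=
  if h : S.Nonempty then S.inf' h f else 0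

/-- The cluster containing agent `i` under the clustering (assignment) `C`. -/
def clusterOf {n k : ℕ} (C : Fin n → Fin k) (i : Fin n) : Finset (Fin n) :=
  Finset.univ.filter (fun j => C j = C i)

/-- The average loss of agent `i` in cluster `S`. -/
noncomputable def avgLoss {n : ℕ} (d : Fin n → Fin n → ℝ) (i : Fin n)
    (S : Finset (Fin n)) : ℝ :=
  (∑ j ∈ S, d i j) / (S.card : ℝ)

/-- The maximum loss of agent `i` in cluster `S`. -/
noncomputable def maxLoss {n : ℕ} (d : Fin n → Fin n → ℝ) (i : Fin n)
    (S : Finset (Fin n)) : ℝ :=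
  maxOver S (d i)

/-- `d` is a (pseudo)metric on the agents: zero on the diagonal, symmetric, and
satisfying the triangle inequality. -/
def IsPseudometric {n : ℕ} (d : Fin n → Fin n → ℝ) : Prop :=
  (∀ i, d i i = 0) ∧ (∀ i j, d i j = d j i) ∧ (∀ i j l, d i l ≤ d i j + d j l)

/-- `C` is in the `α`-core: there is no group `S` of at least `n/k` agents such that
`α · ℓ i S < ℓ i (C(i))` for every `i ∈ S`. -/
def InCore {n k : ℕ} (α : ℝ) (ℓ : Fin n → Finset (Fin n) → ℝ) (C : Fin n → Fin k) : Prop :=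
  ¬ ∃ S : Finset (Fin n), (n : ℝ) / k ≤ S.card ∧ ∀ i ∈ S, α * ℓ i S < ℓ i (clusterOf C i)

/-- `C` satisfies `α`-FJR: there is no group `S` of at least `n/k` agents such that
`α · max_{i ∈ S} ℓ i S < min_{j ∈ S} ℓ j (C(j))`. -/
def SatisfiesFJR {n k : ℕ} (α : ℝ) (ℓ : Fin n → Finset (Fin n) → ℝ)
    (C : Fin n → Fin k) : Prop :=
  ¬ ∃ S : Finset (Fin n), (n : ℝ) / k ≤ S.card ∧
      α * maxOver S (fun i => ℓ i S) < minOver S (fun j => ℓ j (clusterOf C j))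

-- auxiliary lemmas about maxOver / minOver
lemma le_maxOver {ι : Type*} {S : Finset ι} {f : ι → ℝ} {i : ι} (hi : i ∈ S) :
    f i ≤ maxOver S f := by
  have hS : S.Nonempty := ⟨i, hi⟩
  rw [maxOver, dif_pos hS]
  exact Finset.le_sup' f hi

lemma maxOver_le {ι : Type*} {S : Finset ι} {f : ι → ℝ} {a : ℝ} (hS : S.Nonempty)
    (h : ∀ i ∈ S, f i ≤ a) : maxOver S f ≤ a := by
  rw [maxOver, dif_pos hS]
  exact Finset.sup'_le hS f h

lemma minOver_le {ι : Type*} {S : Finset ι} {f : ι → ℝ} {i : ι} (hi : i ∈ S) :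
    minOver S f ≤ f i := by
  have hS : S.Nonempty := ⟨i, hi⟩
  rw [minOver, dif_pos hS]
  exact Finset.inf'_le f hi

lemma maxOver_nonneg {ι : Type*} {S : Finset ι} {f : ι → ℝ} (hS : S.Nonempty)
    (h : ∀ i ∈ S, 0 ≤ f i) : 0 ≤ maxOver S f := by
  obtain ⟨i, hi⟩ := hS
  exact le_trans (h i hi) (le_maxOver hi)

/-- the (average-loss) cohesion of a set -/
noncomputable def coh {n : ℕ} (d : Fin n → Fin n → ℝ) (T : Finset (Fin n)) : ℝ :=
  maxOver T (fun i => avgLoss d i T)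

/-- one greedy step: a subset of `R` of size `≥ n/k` with minimal cohesion -/
noncomputable def gstep {n : ℕ} (d : Fin n → Fin n → ℝ) (k : ℕ) (R : Finset (Fin n)) :
    Finset (Fin n) :=
  if h : (R.powerset.filter (fun T => (n : ℝ) / k ≤ T.card)).Nonempty
  then (Finset.exists_min_image _ (coh d) h).choose
  else R

lemma gstep_subset {n : ℕ} (d : Fin n → Fin n → ℝ) (k : ℕ) (R : Finset (Fin n)) :
    gstep d k R ⊆ R := by
  rw [gstep]
  split
  · next h =>
    have := (Finset.exists_min_image _ (coh d) h).choose_spec.1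
    exact Finset.mem_powerset.mp (Finset.mem_filter.mp this).1
  · exact subset_rfl

lemma gstep_spec {n : ℕ} (d : Fin n → Fin n → ℝ) {k : ℕ} {R : Finset (Fin n)}
    (hR : (n : ℝ) / k ≤ R.card) :
    (n : ℝ) / k ≤ (gstep d k R).card ∧
      ∀ T ⊆ R, (n : ℝ) / k ≤ T.card → coh d (gstep d k R) ≤ coh d T := by
  have h : (R.powerset.filter (fun T => (n : ℝ) / k ≤ T.card)).Nonempty :=
    ⟨R, by simp [Finset.mem_filter, hR]⟩
  rw [gstep, dif_pos h]
  have hs := (Finset.exists_min_image _ (coh d) h).choose_spec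
  exact ⟨(Finset.mem_filter.mp hs.1).2, fun T hT hTg =>
    hs.2 T (Finset.mem_filter.mpr ⟨Finset.mem_powerset.mpr hT, hTg⟩)⟩

/-- the sequence of remaining agents -/
noncomputable def Rseq {n : ℕ} (d : Fin n → Fin n → ℝ) (k : ℕ) : ℕ → Finset (Fin n)
  | 0 => Finset.univ
  | s + 1 => Rseq d k s \ gstep d k (Rseq d k s)

lemma Rseq_antitone {n : ℕ} (d : Fin n → Fin n → ℝ) (k : ℕ) {s t : ℕ} (h : s ≤ t) :
    Rseq d k t ⊆ Rseq d k s := by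
  induction t with
  | zero => simp_all
  | succ t ih =>
    rcases Nat.eq_or_lt_of_le h with rfl | h'
    · exact subset_rfl
    · exact (Finset.sdiff_subset).trans (ih (Nat.lt_succ_iff.mp h'))

lemma good_iff {n k : ℕ} (hk : 1 ≤ k) (c : ℕ) : (n : ℝ) / k ≤ (c : ℝ) ↔ n ≤ c * k := by
  rw [div_le_iff₀ (by exact_mod_cast hk : (0:ℝ) < k)]
  exact_mod_cast Iff.rfl

lemma Rseq_card {n k : ℕ} (d : Fin n → Fin n → ℝ) (hk : 1 ≤ k) :
    ∀ s, (Rseq d k s).card * k + s * n ≤ n * k ∨ Rseq d k s = ∅ := by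
  intro s
  induction s with
  | zero => left; simp [Rseq]
  | succ s ih =>
    rcases ih with ih | ih
    · by_cases hg : (n : ℝ) / k ≤ ((Rseq d k s).card : ℝ)
      · left
        have hspec := gstep_spec d hg
        have hsub := gstep_subset d k (Rseq d k s)
        have hcard : (Rseq d k (s+1)).card = (Rseq d k s).card - (gstep d k (Rseq d k s)).card := by
          rw [Rseq, Finset.card_sdiff_of_subset hsub]
        have h1 : n ≤ (gstep d k (Rseq d k s)).card * k := (good_iff hk _).mp hspec.1
        have h2 : n ≤ (Rseq d k s).card * k := (good_iff hk _).mp hg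
        have h3 : (gstep d k (Rseq d k s)).card ≤ (Rseq d k s).card :=
          Finset.card_le_card hsub
        rw [hcard]
        have h5 : ((Rseq d k s).card - (gstep d k (Rseq d k s)).card) * k
            = (Rseq d k s).card * k - (gstep d k (Rseq d k s)).card * k :=
          Nat.sub_mul _ _ _
        have h6 : (gstep d k (Rseq d k s)).card * k ≤ (Rseq d k s).card * k :=
          Nat.mul_le_mul_right k h3
        have h7 : (s + 1) * n = s * n + n := by ring
        omega
      · right
        rw [Rseq, gstep, dif_neg]
        · simp
        · intro ⟨T, hT⟩
          simp only [Finset.mem_filter, Finset.mem_powerset] at hT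
          exact hg (le_trans hT.2 (by exact_mod_cast Finset.card_le_card hT.1))
    · right; rw [Rseq, ih]; simp

lemma Rseq_k_empty {n k : ℕ} (d : Fin n → Fin n → ℝ) (hk : 1 ≤ k) (hkn : k ≤ n) :
    Rseq d k k = ∅ := by
  rcases Rseq_card d hk k with h | h
  · by_contra hne
    have h1 : 1 ≤ (Rseq d k k).card := Finset.card_pos.mpr (Finset.nonempty_iff_ne_empty.mpr hne)
    nlinarith [h1, hk, hkn]
  · exact h

/-- the step at which agent `i` is captured -/
noncomputable def idx {n : ℕ} (d : Fin n → Fin n → ℝ) (k : ℕ) (i : Fin n) : ℕ :=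
  sInf {s | i ∉ Rseq d k (s + 1)}

variable {n k : ℕ} {d : Fin n → Fin n → ℝ}

lemma idx_set_nonempty (hk : 1 ≤ k) (hkn : k ≤ n) (i : Fin n) :
    {s | i ∉ Rseq d k (s + 1)}.Nonempty := by
  refine ⟨k - 1, ?_⟩
  have hkk : k - 1 + 1 = k := Nat.succ_pred_eq_of_pos hk
  show i ∉ Rseq d k (k - 1 + 1)
  rw [hkk, Rseq_k_empty d hk hkn]
  simp

lemma idx_lt (hk : 1 ≤ k) (hkn : k ≤ n) (i : Fin n) : idx d k i < k := by
  have := Nat.sInf_le (idx_set_nonempty (d := d) hk hkn i).choose_spec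
  have h2 : idx d k i ≤ k - 1 := by
    apply Nat.sInf_le
    have hkk : k - 1 + 1 = k := Nat.succ_pred_eq_of_pos hk
    show i ∉ Rseq d k (k - 1 + 1)
    rw [hkk, Rseq_k_empty d hk hkn]; simp
  omega

lemma not_mem_idx_succ (hk : 1 ≤ k) (hkn : k ≤ n) (i : Fin n) :
    i ∉ Rseq d k (idx d k i + 1) :=
  Nat.sInf_mem (idx_set_nonempty hk hkn i)

lemma mem_of_le_idx {i : Fin n} {s : ℕ} (hs : s ≤ idx d k i) : i ∈ Rseq d k s := by
  cases s with
  | zero => simp [Rseq]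
  | succ t =>
    by_contra hmem
    have : idx d k i ≤ t := Nat.sInf_le hmem
    omega

lemma mem_gstep_idx (hk : 1 ≤ k) (hkn : k ≤ n) (i : Fin n) :
    i ∈ gstep d k (Rseq d k (idx d k i)) := by
  have h1 : i ∈ Rseq d k (idx d k i) := mem_of_le_idx le_rfl
  have h2 := not_mem_idx_succ (d := d) hk hkn i
  rw [Rseq, Finset.mem_sdiff] at h2
  by_contra hcon
  exact h2 ⟨h1, hcon⟩

lemma idx_eq_of_mem_gstep {i : Fin n} {s : ℕ} (hi : i ∈ gstep d k (Rseq d k s)) :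
    idx d k i = s := by
  have hiR : i ∈ Rseq d k s := gstep_subset d k _ hi
  have hwit : i ∉ Rseq d k (s + 1) := by
    rw [Rseq, Finset.mem_sdiff]
    intro h; exact h.2 hi
  have hne : {t | i ∉ Rseq d k (t + 1)}.Nonempty := ⟨s, hwit⟩
  have hmem : i ∉ Rseq d k (idx d k i + 1) := Nat.sInf_mem hne
  have hge : s ≤ idx d k i := by
    by_contra h
    push_neg at h
    exact hmem (Rseq_antitone d k (by omega) hiR)
  have hle : idx d k i ≤ s := Nat.sInf_le hwit
  omega


lemma d_nonneg {n : ℕ} {d : Fin n → Fin n → ℝ} (hd : IsPseudometric d) (i j : Fin n) :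
    0 ≤ d i j := by
  have h := hd.2.2 i j i
  rw [hd.1 i, hd.2.1 j i] at h
  linarith

lemma avgLoss_nonneg {n : ℕ} {d : Fin n → Fin n → ℝ} (hd : IsPseudometric d)
    (i : Fin n) (S : Finset (Fin n)) : 0 ≤ avgLoss d i S :=
  div_nonneg (Finset.sum_nonneg fun j _ => d_nonneg hd i j) (Nat.cast_nonneg _)

lemma avgLoss_le_maxLoss {n : ℕ} {d : Fin n → Fin n → ℝ} {S : Finset (Fin n)}
    (hS : S.Nonempty) (i : Fin n) : avgLoss d i S ≤ maxLoss d i S := by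
  have hc : (0 : ℝ) < S.card := by exact_mod_cast Finset.card_pos.mpr hS
  rw [avgLoss, div_le_iff₀ hc]
  calc ∑ j ∈ S, d i j ≤ ∑ _j ∈ S, maxLoss d i S :=
        Finset.sum_le_sum fun j hj => le_maxOver hj
    _ = maxLoss d i S * S.card := by
        rw [Finset.sum_const, nsmul_eq_mul, mul_comm]

lemma dist_le_two_coh {n : ℕ} {d : Fin n → Fin n → ℝ} (hd : IsPseudometric d)
    {T : Finset (Fin n)} {j t : Fin n} (hj : j ∈ T) (ht : t ∈ T) :
    d j t ≤ 2 * coh d T := by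
  have hTne : T.Nonempty := ⟨j, hj⟩
  have hc : (0 : ℝ) < T.card := by exact_mod_cast Finset.card_pos.mpr hTne
  have hsum : (T.card : ℝ) * d j t ≤ ∑ x ∈ T, d j x + ∑ x ∈ T, d t x := by
    have h1 : (T.card : ℝ) * d j t = ∑ _x ∈ T, d j t := by
      rw [Finset.sum_const, nsmul_eq_mul]
    rw [h1, ← Finset.sum_add_distrib]
    refine Finset.sum_le_sum fun x _ => ?_
    have := hd.2.2 j x t
    rw [hd.2.1 x t] at this
    linarith [this, (hd.2.1 t x ▸ le_refl (d t x))]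
  have havgj : ∑ x ∈ T, d j x = avgLoss d j T * T.card := by
    rw [avgLoss, div_mul_cancel₀ _ hc.ne']
  have havgt : ∑ x ∈ T, d t x = avgLoss d t T * T.card := by
    rw [avgLoss, div_mul_cancel₀ _ hc.ne']
  have h2 : avgLoss d j T ≤ coh d T := le_maxOver (f := fun i => avgLoss d i T) hj
  have h3 : avgLoss d t T ≤ coh d T := le_maxOver (f := fun i => avgLoss d i T) ht
  rw [havgj, havgt] at hsum
  nlinarith

lemma clusterOf_eq {n k : ℕ} {d : Fin n → Fin n → ℝ} (hk : 1 ≤ k) (hkn : k ≤ n)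
    (i : Fin n) :
    clusterOf (fun i => (⟨idx d k i, idx_lt hk hkn i⟩ : Fin k)) i
      = gstep d k (Rseq d k (idx d k i)) := by
  ext j
  simp only [clusterOf, Finset.mem_filter, Finset.mem_univ, true_and, Fin.mk.injEq]
  constructor
  · intro h
    rw [← h]
    exact mem_gstep_idx hk hkn j
  · intro h
    exact idx_eq_of_mem_gstep h

/-- For any `n` agents with a metric `d` and any `k` with `1 ≤ k ≤ n`, there is a single
`k`-clustering that simultaneously satisfies `4`-FJR for the average loss and `2`-FJR for
the maximum loss. -/
theorem stmt11 (n k : ℕ) (hk : 1 ≤ k) (hkn : k ≤ n) (d : Fin n → Fin n → ℝ)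
    (hd : IsPseudometric d) :
    ∃ C : Fin n → Fin k, SatisfiesFJR 4 (avgLoss d) C ∧ SatisfiesFJR 2 (maxLoss d) C := by
  classical
  set C : Fin n → Fin k := fun i => (⟨idx d k i, idx_lt hk hkn i⟩ : Fin k) with hC
  have hn : 1 ≤ n := le_trans hk hkn
  have key : ∀ S : Finset (Fin n), (n : ℝ) / k ≤ S.card →
      ∃ j ∈ S, S.Nonempty ∧ clusterOf C j = gstep d k (Rseq d k (idx d k j)) ∧
        j ∈ gstep d k (Rseq d k (idx d k j)) ∧
        coh d (gstep d k (Rseq d k (idx d k j))) ≤ coh d S := by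
    intro S hScard
    have hkpos : (0 : ℝ) < k := by exact_mod_cast hk
    have hSpos : (0 : ℝ) < S.card := lt_of_lt_of_le
      (div_pos (by exact_mod_cast hn) hkpos) hScard
    have hSne : S.Nonempty := Finset.card_pos.mp (by exact_mod_cast hSpos)
    obtain ⟨j, hjS, hjmin⟩ := Finset.exists_min_image S (idx d k) hSne
    have hSsub : S ⊆ Rseq d k (idx d k j) := fun i hi => mem_of_le_idx (hjmin i hi)
    have hgood : (n : ℝ) / k ≤ ((Rseq d k (idx d k j)).card : ℝ) :=
      le_trans hScard (by exact_mod_cast Finset.card_le_card hSsub)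
    have hspec := gstep_spec d hgood
    exact ⟨j, hjS, hSne, clusterOf_eq hk hkn j, mem_gstep_idx hk hkn j,
      hspec.2 S hSsub hScard⟩
  refine ⟨C, ?_, ?_⟩
  · rintro ⟨S, hScard, hlt⟩
    obtain ⟨j, hjS, hSne, hclus, hjT, hcoh⟩ := key S hScard
    set T := gstep d k (Rseq d k (idx d k j)) with hT
    have h1 : minOver S (fun j' => avgLoss d j' (clusterOf C j')) ≤
        avgLoss d j (clusterOf C j) := minOver_le hjS
    rw [hclus] at h1
    have h2 : avgLoss d j T ≤ coh d T := le_maxOver (f := fun i => avgLoss d i T) hjT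
    have h4 : 0 ≤ maxOver S (fun i => avgLoss d i S) :=
      maxOver_nonneg hSne fun i _ => avgLoss_nonneg hd i S
    have h5 : coh d S = maxOver S (fun i => avgLoss d i S) := rfl
    linarith
  · rintro ⟨S, hScard, hlt⟩
    obtain ⟨j, hjS, hSne, hclus, hjT, hcoh⟩ := key S hScard
    set T := gstep d k (Rseq d k (idx d k j)) with hT
    have hTne : T.Nonempty := ⟨j, hjT⟩
    have h1 : minOver S (fun j' => maxLoss d j' (clusterOf C j')) ≤
        maxLoss d j (clusterOf C j) := minOver_le hjS
    rw [hclus] at h1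
    have h2 : maxLoss d j T ≤ 2 * coh d T :=
      maxOver_le hTne fun t ht => dist_le_two_coh hd hjT ht
    have h3 : coh d S ≤ maxOver S (fun i => maxLoss d i S) :=
      maxOver_le hSne fun i hi => le_trans (avgLoss_le_maxLoss hSne i) (le_maxOver (f := fun i => maxLoss d i S) hi)
    linarith
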